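/- Let Γ₀ = F₂, Γ_n = Γ_{n−1}^{(2)} for n ≥ 1, and X_n the Cayley graph of F₂/Γ_n with respect to the images of the canonical generators, so that each X_n (n ≥ 1) is the ℤ/2-homology cover of X_{n−1} and carries the associated wall metric d_{W_n}. Let (X, d_W) be the coarse disjoint union of the (X_n, d_{W_n}) (with d_W(X_n, X_m) = diam_W(X_n) + diam_W(X_m) + n + m for n ≠ m). Then (X, d_W) coarsely embeds into a Hilbert space. -/

import Mathlib

/-- A multigraph: a set of vertices `V`, a set of edges `E`, and two endpoint maps.
The pair `(src e, tgt e)` records an (arbitrary) orientation of the unoriented edge `e`;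
graphs are regarded as unoriented. -/
structure Multigraph (V E : Type) where
  src : E → V
  tgt : E → V

namespace Multigraph

variable {V E : Type}

/-- The edge `e` is an edge between `u` and `v` (in either direction). -/
def EndsAt (G : Multigraph V E) (e : E) (u v : V) : Prop :=
  (G.src e = u ∧ G.tgt e = v) ∨ (G.src e = v ∧ G.tgt e = u)

/-- A path (walk) in a multigraph from `u` to `v`: a sequence
`(v₀, e₁, v₁, …, e_n, v_n)` where each `e_i` is an edge between `v_{i-1}` and `v_i`. -/
inductive Walk (G : Multigraph V E) : V → V → Type
  | nil (v : V) : Walk G v v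
  | cons {u v w : V} (e : E) (h : G.EndsAt e u v) (p : Walk G v w) : Walk G u w

namespace Walk

variable {G : Multigraph V E}

/-- The length of a path. -/
def length : ∀ {u v : V}, G.Walk u v → ℕ
  | _, _, .nil _ => 0
  | _, _, .cons _ _ p => length p + 1

/-- The list of edges of a path. -/
def edges : ∀ {u v : V}, G.Walk u v → List E
  | _, _, .nil _ => []
  | _, _, .cons e _ p => e :: edges p

/-- The list of vertices of a path (including the first one). -/
def verts : ∀ {u v : V}, G.Walk u v → List V
  | _, _, .nil v => [v]
  | u, _, .cons _ _ p => u :: verts p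

/-- A path has a backtrack if for some `i` it traverses the same edge at steps
`i+1` and `i+2` returning to the same vertex, i.e. `v_i = v_{i+2}` and `e_{i+1} = e_{i+2}`. -/
def HasBacktrack {u v : V} (p : G.Walk u v) : Prop :=
  ∃ i : ℕ, i + 1 < p.edges.length ∧ p.edges[i]? = p.edges[i + 1]? ∧
    p.verts[i]? = p.verts[i + 2]?

end Walk

/-- A multigraph is connected if any two vertices are joined by a path. -/
def Connected (G : Multigraph V E) : Prop := ∀ u v : V, Nonempty (G.Walk u v)

/-- `u` and `v` can be joined by a path avoiding all edges in `F`. -/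
def ReachAvoid (G : Multigraph V E) (F : Set E) (u v : V) : Prop :=
  ∃ p : G.Walk u v, ∀ e ∈ p.edges, e ∉ F

/-- A set of edges `w` is a wall (a cut) if removing these edges from the graph separates
it into exactly two connected components (the associated half-spaces `A` and `B`). -/
def IsWall (G : Multigraph V E) (w : Set E) : Prop :=
  ∃ A B : Set V, A.Nonempty ∧ B.Nonempty ∧ Disjoint A B ∧ A ∪ B = Set.univ ∧
    ∀ u v : V, G.ReachAvoid w u v ↔ ((u ∈ A ∧ v ∈ A) ∨ (u ∈ B ∧ v ∈ B))

/-- A wall structure: a set of walls such that every edge belongs to exactly one wall. -/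
def IsWallStructure (G : Multigraph V E) (W : Set (Set E)) : Prop :=
  (∀ w ∈ W, G.IsWall w) ∧ ∀ e : E, ∃! w, w ∈ W ∧ e ∈ w

/-- The set of edges `w` separates `u` from `v` if after removing `w` there is
no path from `u` to `v` (i.e. they lie in different half-spaces). -/
def Separates (G : Multigraph V E) (w : Set E) (u v : V) : Prop :=
  ¬ G.ReachAvoid w u v

/-- The wall pseudometric associated with a wall structure `W`:
the number of walls of `W` separating `x` from `y`. -/
noncomputable def wallDistOf (G : Multigraph V E) (W : Set (Set E)) (x y : V) : ℕ :=
  {w : Set E | w ∈ W ∧ G.Separates w x y}.ncard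

/-- The graph metric: the length of a shortest path between two vertices. -/
noncomputable def graphDist (G : Multigraph V E) (u v : V) : ℕ :=
  sInf {n : ℕ | ∃ p : G.Walk u v, p.length = n}

/-- A simple loop: a closed path of positive length with no repeated edges and no
repeated vertices (except that the first and last vertex coincide). -/
def IsSimpleLoop (G : Multigraph V E) {v : V} (p : G.Walk v v) : Prop :=
  0 < p.length ∧ p.edges.Nodup ∧ p.verts.dropLast.Nodup

/-- The girth of a multigraph: the length of a shortest simple loop. -/
noncomputable def girth (G : Multigraph V E) : ℕ :=
  sInf {n : ℕ | ∃ (v : V) (p : G.Walk v v), G.IsSimpleLoop p ∧ p.length = n}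

end Multigraph

namespace Multigraph

variable {V E : Type}

/-- A graph is 2-connected if removing any single edge does not disconnect it
(equivalently, every edge lies on a simple loop). -/
def TwoConnected (G : Multigraph V E) : Prop :=
  G.Connected ∧ ∀ (e : E) (u v : V), G.ReachAvoid {e} u v

/-- `T` is (the edge set of) a spanning tree of the finite graph `G`: the edges of `T`
connect all vertices of `G` and `|T| = |V(G)| - 1` (so the subgraph on `T` is a tree). -/
def IsSpanningTree [Fintype V] (G : Multigraph V E) (T : Finset E) : Prop :=
  (∀ u v : V, ∃ p : G.Walk u v, ∀ e ∈ p.edges, e ∈ T) ∧ T.card + 1 = Fintype.card V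

variable [Fintype E] [DecidableEq E]

/-- Given a spanning tree `T` with `S = E \ T = Tᶜ`, crossing the edge `e` changes the
second coordinate `τ ⊆ S` of a vertex of the `ℤ/2`-homology cover to `τ △ {e}` if `e ∈ S`,
and leaves it unchanged if `e ∈ T`. -/
def tauStep (T : Finset E) (e : E) (τ : {τ : Finset E // τ ⊆ Tᶜ}) :
    {τ : Finset E // τ ⊆ Tᶜ} :=
  if he : e ∈ Tᶜ then
    ⟨symmDiff τ.1 {e}, fun x hx => by
      rcases Finset.mem_symmDiff.mp hx with ⟨h1, _⟩ | ⟨h1, _⟩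
      · exact τ.2 h1
      · rwa [Finset.mem_singleton.mp h1]⟩
  else τ

/-- The `ℤ/2`-homology cover of `G` associated with the spanning tree `T` (with
`S = Tᶜ`): vertices are `V × 𝒫(S)`, edges are `E × 𝒫(S)`, where the edge `(e, τ)`
joins `(x, τ)` to `(y, τ)` if `e ∉ S`, and `(x, τ)` to `(y, τ △ {e})` if `e ∈ S`
with the orientation `x → y`. -/
def cover (G : Multigraph V E) (T : Finset E) :
    Multigraph (V × {τ : Finset E // τ ⊆ Tᶜ}) (E × {τ : Finset E // τ ⊆ Tᶜ}) where
  src p := (G.src p.1, p.2)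
  tgt p := (G.tgt p.1, tauStep T p.1 p.2)

/-- The covering projection maps paths in the cover to paths in the base graph,
forgetting the second coordinates. -/
def projWalk {G : Multigraph V E} {T : Finset E} :
    ∀ {x y : V × {τ : Finset E // τ ⊆ Tᶜ}}, (cover G T).Walk x y → G.Walk x.1 y.1
  | _, _, .nil v => .nil v.1
  | _, _, .cons e h p =>
      .cons e.1
        (by
          rcases h with ⟨h1, h2⟩ | ⟨h1, h2⟩
          · exact Or.inl ⟨congrArg Prod.fst h1, congrArg Prod.fst h2⟩
          · exact Or.inr ⟨congrArg Prod.fst h1, congrArg Prod.fst h2⟩)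
        (projWalk p)

/-- A path `p` in `G` from `x₀` to `y₀` is `(x,y)`-admissible (for vertices
`x = (x₀, τ_x)`, `y = (y₀, τ_y)` of the cover) if for every `e ∈ S = Tᶜ`, the number
of occurrences of `e` among the edges of `p` is odd when `e ∈ τ_x △ τ_y` and even
otherwise. -/
def Admissible (G : Multigraph V E) (T : Finset E)
    (x y : V × {τ : Finset E // τ ⊆ Tᶜ}) (p : G.Walk x.1 y.1) : Prop :=
  ∀ e ∈ (Tᶜ : Finset E),
    p.edges.count e % 2 = if e ∈ symmDiff x.2.1 y.2.1 then 1 else 0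

/-- The wall `w_e = π⁻¹(e)` of the `ℤ/2`-homology cover associated to an edge `e` of
the base graph. -/
def wallOf (G : Multigraph V E) (T : Finset E) (e : E) :
    Set (E × {τ : Finset E // τ ⊆ Tᶜ}) := {f | f.1 = e}

/-- The wall metric on the `ℤ/2`-homology cover: the number of walls
`w_e = π⁻¹(e)`, `e ∈ E(G)`, separating `x` from `y`. -/
noncomputable def wallDist (G : Multigraph V E) (T : Finset E)
    (x y : V × {τ : Finset E // τ ⊆ Tᶜ}) : ℕ :=
  {e : E | (cover G T).Separates (wallOf G T e) x y}.ncard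

end Multigraph

open Multigraph

/-- A finite multigraph with decidable equality, bundled. -/
structure Lv where
  V : Type
  E : Type
  G : Multigraph V E
  fV : Fintype V
  fE : Fintype E
  dV : DecidableEq V
  dE : DecidableEq E

/-- A choice of a spanning tree of `G` (when one exists). -/
noncomputable def chooseTree {V E : Type} [Fintype V] [Fintype E] (G : Multigraph V E) :
    Finset E :=
  letI := Classical.dec (∃ T : Finset E, G.IsSpanningTree T)
  if h : ∃ T : Finset E, G.IsSpanningTree T then h.choose else ∅

/-- The `ℤ/2`-homology cover of a bundled finite multigraph, with respect to the chosen
spanning tree. -/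
noncomputable def Lv.next (L : Lv) : Lv :=
  letI := L.fV; letI := L.fE; letI := L.dV; letI := L.dE
  { V := L.V × {τ : Finset L.E // τ ⊆ (chooseTree L.G)ᶜ}
    E := L.E × {τ : Finset L.E // τ ⊆ (chooseTree L.G)ᶜ}
    G := cover L.G (chooseTree L.G)
    fV := inferInstance
    fE := inferInstance
    dV := inferInstance
    dE := inferInstance }

/-- The "figure eight" graph: one vertex and two (self-loop) edges. -/
def figureEight : Lv :=
  { V := Unit
    E := Fin 2
    G := { src := fun _ => (), tgt := fun _ => () }
    fV := inferInstance
    fE := inferInstance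
    dV := inferInstance
    dE := inferInstance }

/-- The tower `X₀ = ` figure eight, `X_{n+1} = ` the `ℤ/2`-homology cover of `X_n`;
so `X_n` is the Cayley graph of `F₂/Γ_n`. -/
noncomputable def lv : ℕ → Lv := fun n => Nat.rec figureEight (fun _ L => L.next) n

/-- The graph metric `d_{X_n}` on `X_n`. -/
noncomputable def graphDistAt (n : ℕ) : (lv n).V → (lv n).V → ℕ :=
  fun x y => graphDist (lv n).G x y

/-- The wall metric `d_{W_n}` on `X_n`, coming from `X_n` being the
`ℤ/2`-homology cover of `X_{n-1}` (and trivial on the one-point graph `X₀`). -/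
noncomputable def wallDistAt : (n : ℕ) → (lv n).V → (lv n).V → ℕ
  | 0 => fun _ _ => 0
  | n + 1 => fun x y =>
      letI := (lv n).fV; letI := (lv n).fE; letI := (lv n).dV; letI := (lv n).dE
      wallDist (lv n).G (chooseTree (lv n).G) x y

/-- The diameter of `(X_n, d_{X_n})`. -/
noncomputable def diamX (n : ℕ) : ℕ := sSup {k : ℕ | ∃ x y, graphDistAt n x y = k}

/-- The diameter of `(X_n, d_{W_n})`. -/
noncomputable def diamW (n : ℕ) : ℕ := sSup {k : ℕ | ∃ x y, wallDistAt n x y = k}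

/-- The box space `X = ⊔ X_n` (as a set). -/
def BoxV : Type := Σ n : ℕ, (lv n).V

/-- The metric `d_X` of the coarse disjoint union `(X, d_X) = ⊔ (X_n, d_{X_n})`. -/
noncomputable def boxDistX (p q : BoxV) : ℕ :=
  if h : p.1 = q.1 then graphDistAt q.1 (h ▸ p.2) q.2
  else diamX p.1 + diamX q.1 + p.1 + q.1

/-- The metric `d_W` of the coarse disjoint union `(X, d_W) = ⊔ (X_n, d_{W_n})`. -/
noncomputable def boxDistW (p q : BoxV) : ℕ :=
  if h : p.1 = q.1 then wallDistAt q.1 (h ▸ p.2) q.2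
  else diamW p.1 + diamW q.1 + p.1 + q.1
section CoarseGeometry

/-- `f` is a coarse embedding of `(X, d)` into the normed space `H`:
for all sequences `(x_n)`, `(y_n)` in `X`, `d(x_n, y_n) → ∞` if and only if
`‖f(x_n) - f(y_n)‖ → ∞`. -/
def IsCoarseEmbedding {X H : Type} [NormedAddCommGroup H] (d : X → X → ℝ) (f : X → H) :
    Prop :=
  ∀ x y : ℕ → X,
    Filter.Tendsto (fun n => d (x n) (y n)) Filter.atTop Filter.atTop ↔
    Filter.Tendsto (fun n => ‖f (x n) - f (y n)‖) Filter.atTop Filter.atTop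

/-- `(X, d)` coarsely embeds into a (real) Hilbert space. -/
def CoarselyEmbeddableIntoHilbert {X : Type} (d : X → X → ℝ) : Prop :=
  ∃ (H : Type) (_ : NormedAddCommGroup H) (_ : InnerProductSpace ℝ H)
    (_ : CompleteSpace H) (f : X → H), IsCoarseEmbedding d f

/-- Property A for a space `X` with distance function `d`: for every `ε > 0` and
`R > 0` there are a family `(A_x)_{x ∈ X}` of finite nonempty subsets of `X × ℕ` and
`S > 0` such that `|A_x △ A_y| < ε · |A_x ∩ A_y|` whenever `d(x,y) ≤ R`, and
`A_x ⊆ B(x, S) × ℕ` for every `x`. -/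
def HasPropertyA {X : Type} (d : X → X → ℝ) : Prop :=
  letI : DecidableEq (X × ℕ) := Classical.decEq _
  ∀ ε : ℝ, 0 < ε → ∀ R : ℝ, 0 < R →
    ∃ (A : X → Finset (X × ℕ)) (S : ℝ), 0 < S ∧
      (∀ x : X, (A x).Nonempty) ∧
      (∀ x y : X, d x y ≤ R →
        ((symmDiff (A x) (A y)).card : ℝ) < ε * ((A x ∩ A y).card : ℝ)) ∧
      (∀ x : X, ∀ p ∈ A x, d x p.1 ≤ S)

end CoarseGeometry

namespace Multigraph
variable {V E : Type} {G : Multigraph V E}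

theorem EndsAt.symm' {e : E} {u v : V} (h : G.EndsAt e u v) : G.EndsAt e v u := by
  rcases h with h | h
  · exact Or.inr h
  · exact Or.inl h

def Walk.append : ∀ {u v w : V}, G.Walk u v → G.Walk v w → G.Walk u w
  | _, _, _, .nil _, q => q
  | _, _, _, .cons e h p, q => .cons e h (p.append q)

theorem Walk.edges_append : ∀ {u v w : V} (p : G.Walk u v) (q : G.Walk v w),
    (p.append q).edges = p.edges ++ q.edges
  | _, _, _, .nil _, _ => rfl
  | _, _, _, .cons e h p, q => by
      simp only [Walk.append, Walk.edges, edges_append p q, List.cons_append]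

def Walk.reverse : ∀ {u v : V}, G.Walk u v → G.Walk v u
  | _, _, .nil v => .nil v
  | _, _, .cons e h p => p.reverse.append (.cons e h.symm' (.nil _))

theorem Walk.edges_reverse : ∀ {u v : V} (p : G.Walk u v),
    p.reverse.edges = p.edges.reverse
  | _, _, .nil _ => rfl
  | _, _, .cons e h p => by
      simp only [Walk.reverse, Walk.edges_append, Walk.edges, edges_reverse p,
        List.reverse_cons, List.nil_append]

theorem ReachAvoid.refl (w : Set E) (u : V) : G.ReachAvoid w u u :=
  ⟨.nil u, by intro e he; simp [Walk.edges] at he⟩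

theorem ReachAvoid.symm {w : Set E} {u v : V} (h : G.ReachAvoid w u v) :
    G.ReachAvoid w v u := by
  obtain ⟨p, hp⟩ := h
  exact ⟨p.reverse, fun e he => hp e (by
    rw [Walk.edges_reverse] at he; exact List.mem_reverse.mp he)⟩

theorem ReachAvoid.trans {w : Set E} {u v x : V} (h1 : G.ReachAvoid w u v)
    (h2 : G.ReachAvoid w v x) : G.ReachAvoid w u x := by
  obtain ⟨p, hp⟩ := h1
  obtain ⟨q, hq⟩ := h2
  refine ⟨p.append q, fun e he => ?_⟩
  rw [Walk.edges_append, List.mem_append] at he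
  exact he.elim (hp e) (hq e)

section Chi
variable [Fintype V]

open Classical in
/-- The reachability class of `x` avoiding `w`. -/
noncomputable def cls (G : Multigraph V E) (w : Set E) (x : V) : Finset V :=
  Finset.univ.filter (fun z => G.ReachAvoid w x z)

theorem mem_cls_iff {G : Multigraph V E} {w : Set E} {x z : V} :
    z ∈ cls G w x ↔ G.ReachAvoid w x z := by
  simp [cls]

theorem mem_cls_self (G : Multigraph V E) (w : Set E) (x : V) : x ∈ cls G w x :=
  mem_cls_iff.mpr (ReachAvoid.refl w x)

theorem cls_eq {G : Multigraph V E} {w : Set E} {x y : V} (h : G.ReachAvoid w x y) :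
    cls G w x = cls G w y := by
  ext z
  rw [mem_cls_iff, mem_cls_iff]
  exact ⟨fun hz => h.symm.trans hz, fun hz => h.trans hz⟩

theorem cls_disjoint {G : Multigraph V E} {w : Set E} {x y : V}
    (h : ¬ G.ReachAvoid w x y) : ∀ z : V, ¬ (z ∈ cls G w x ∧ z ∈ cls G w y) := by
  rintro z ⟨hx, hy⟩
  rw [mem_cls_iff] at hx hy
  exact h (hx.trans hy.symm)

open Classical in
/-- Normalized indicator of the reachability class. -/
noncomputable def chi (G : Multigraph V E) (w : Set E) (x v : V) : ℝ :=
  if v ∈ cls G w x then (Real.sqrt (2 * (cls G w x).card))⁻¹ else 0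

open Classical in
theorem sum_chi_sq (G : Multigraph V E) (w : Set E) (x : V) :
    ∑ v : V, (chi G w x v) ^ 2 = 1 / 2 := by
  classical
  have hcard : 0 < (cls G w x).card := Finset.card_pos.mpr ⟨x, mem_cls_self G w x⟩
  have h2 : (0:ℝ) < 2 * (cls G w x).card := by positivity
  rw [Finset.sum_congr rfl (fun v _ => rfl)]
  have : ∀ v : V, (chi G w x v) ^ 2 =
      if v ∈ cls G w x then (2 * ((cls G w x).card : ℝ))⁻¹ else 0 := by
    intro v
    unfold chi
    split
    · rw [← Real.sqrt_inv, Real.sq_sqrt (by positivity)]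
    · ring
  rw [Finset.sum_congr rfl (fun v _ => this v)]
  rw [Finset.sum_ite_mem, Finset.univ_inter, Finset.sum_const, nsmul_eq_mul]
  field_simp

open Classical in
theorem sum_chi_diff_sq (G : Multigraph V E) (w : Set E) (x y : V) :
    ∑ v : V, (chi G w x v - chi G w y v) ^ 2 =
      if G.ReachAvoid w x y then 0 else 1 := by
  classical
  split
  · next h =>
    have : chi G w x = chi G w y := by
      funext v; unfold chi; rw [cls_eq h]
    simp [this]
  · next h =>
    have hdisj := cls_disjoint h
    have hcross : ∀ v : V, chi G w x v * chi G w y v = 0 := by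
      intro v
      unfold chi
      by_cases hx : v ∈ cls G w x
      · by_cases hy : v ∈ cls G w y
        · exact absurd ⟨hx, hy⟩ (hdisj v)
        · simp [hx, hy]
      · simp [hx]
    have expand : ∀ v : V, (chi G w x v - chi G w y v) ^ 2 =
        (chi G w x v) ^ 2 + (chi G w y v) ^ 2 - 2 * (chi G w x v * chi G w y v) := by
      intro v; ring
    rw [Finset.sum_congr rfl (fun v _ => expand v)]
    rw [Finset.sum_sub_distrib, Finset.sum_add_distrib]
    rw [sum_chi_sq, sum_chi_sq]
    simp [hcross]
    norm_num

/-- Counting separating walls via the chi functions. -/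
theorem sum_sum_chi {K : Type} [Fintype K] (G : Multigraph V E) (w : K → Set E)
    (x y : V) :
    ∑ k : K, ∑ v : V, (chi G (w k) x v - chi G (w k) y v) ^ 2 =
      ({k : K | G.Separates (w k) x y}.ncard : ℝ) := by
  classical
  have : {k : K | G.Separates (w k) x y} =
      ↑(Finset.univ.filter (fun k => G.Separates (w k) x y)) := by
    ext k; simp
  rw [this, Set.ncard_coe_finset]
  rw [Finset.sum_congr rfl (fun k _ => sum_chi_diff_sq G (w k) x y)]
  rw [Finset.card_filter]
  push_cast
  apply Finset.sum_congr rfl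
  intro k _
  unfold Separates
  split <;> simp_all

end Chi
end Multigraph
open Multigraph

/-- Index type for the level-`n` embedding. -/
def In : ℕ → Type
  | 0 => Empty
  | n + 1 => (lv n).E × (lv (n + 1)).V

noncomputable instance fintypeLvV (n : ℕ) : Fintype (lv n).V := (lv n).fV
noncomputable instance fintypeLvE (n : ℕ) : Fintype (lv n).E := (lv n).fE

noncomputable instance fintypeIn (n : ℕ) : Fintype (In n) := by
  cases n with
  | zero => exact (inferInstance : Fintype Empty)
  | succ n => exact (inferInstance : Fintype ((lv n).E × (lv (n + 1)).V))

/-- A base point in each level. -/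
noncomputable def basept : ∀ n : ℕ, (lv n).V
  | 0 => ()
  | n + 1 =>
      letI := (lv n).fE; letI := (lv n).dE
      (basept n, ⟨∅, Finset.empty_subset _⟩)

/-- The level-`n` wall embedding (normalized). -/
noncomputable def uu : ∀ n : ℕ, (lv n).V → In n → ℝ
  | 0 => fun _ i => i.elim
  | n + 1 => fun x i =>
      letI := (lv n).fE; letI := (lv n).dE
      chi (lv (n + 1)).G (wallOf (lv n).G (chooseTree (lv n).G) i.1) x i.2

theorem sum_uu (n : ℕ) (x y : (lv n).V) :
    ∑ i : In n, (uu n x i - uu n y i) ^ 2 = (wallDistAt n x y : ℝ) := by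
  cases n with
  | zero =>
    rw [show wallDistAt 0 x y = 0 from rfl, Nat.cast_zero]
    exact Fintype.sum_eq_zero _ fun i => Empty.elim i
  | succ n =>
    letI := (lv n).fV; letI := (lv n).fE; letI := (lv n).dV; letI := (lv n).dE
    show ∑ i : (lv n).E × (lv (n+1)).V, _ = _
    rw [Fintype.sum_prod_type]
    have := sum_sum_chi (K := (lv n).E) (lv (n+1)).G
      (fun e => wallOf (lv n).G (chooseTree (lv n).G) e) x y
    rw [show (∑ e : (lv n).E, ∑ v : (lv (n+1)).V,
        (uu (n+1) x (e, v) - uu (n+1) y (e, v)) ^ 2) =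
      ∑ e : (lv n).E, ∑ v : (lv (n+1)).V,
        (chi (lv (n+1)).G (wallOf (lv n).G (chooseTree (lv n).G) e) x v -
         chi (lv (n+1)).G (wallOf (lv n).G (chooseTree (lv n).G) e) y v) ^ 2 from rfl]
    rw [this]
    rfl

theorem wallDistAt_le_diamW (n : ℕ) (x y : (lv n).V) : wallDistAt n x y ≤ diamW n := by
  apply le_csSup
  · have : {k : ℕ | ∃ x y, wallDistAt n x y = k} =
        Set.range (fun p : (lv n).V × (lv n).V => wallDistAt n p.1 p.2) := by
      ext k
      constructor
      · rintro ⟨a, b, rfl⟩; exact ⟨(a, b), rfl⟩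
      · rintro ⟨⟨a, b⟩, rfl⟩; exact ⟨a, b, rfl⟩
    rw [this]
    letI := (lv n).fV
    exact (Set.finite_range _).bddAbove
  · exact ⟨x, y, rfl⟩
/-- Global index type for the embedding. -/
abbrev Jt : Type := (Σ n : ℕ, In n) ⊕ ℕ

noncomputable instance (priority := 2000) : DecidableEq ((Σ n : ℕ, In n) ⊕ ℕ) :=
  Classical.decEq _

/-- The coordinates of the embedding of the box space into `ℓ²(Jt)`. -/
noncomputable def gfun (p : BoxV) : Jt → ℝ
  | .inl ⟨n, i⟩ => if h : p.1 = n then uu n (h ▸ p.2) i - uu n (basept n) i else 0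
  | .inr m => if p.1 = m then Real.sqrt ((diamW m : ℝ) + m) else 0

/-- The support of `gfun p`. -/
noncomputable def spt (p : BoxV) : Finset Jt :=
  (Finset.univ.image fun i : In p.1 => (Sum.inl ⟨p.1, i⟩ : Jt)) ∪ {Sum.inr p.1}

theorem gfun_eq_zero {p : BoxV} : ∀ j ∉ spt p, gfun p j = 0 := by
  rintro (⟨n, i⟩ | m) hj
  · show dite _ _ _ = 0
    split
    · next h =>
      exfalso
      apply hj
      subst h
      exact Finset.mem_union_left _ (Finset.mem_image_of_mem _ (Finset.mem_univ i))
    · rfl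
  · show ite _ _ _ = 0
    split
    · next h =>
      exfalso
      apply hj
      rw [← h]
      exact Finset.mem_union_right _ (Finset.mem_singleton_self _)
    · rfl

theorem gfun_memℓp (p : BoxV) : Memℓp (gfun p) 2 := by
  apply memℓp_gen
  apply summable_of_ne_finset_zero (s := spt p)
  intro j hj
  rw [gfun_eq_zero j hj]
  simp only [norm_zero]
  rw [Real.zero_rpow]
  norm_num

/-- The embedding of the box space into `ℓ²(Jt)`. -/
noncomputable def fmap (p : BoxV) : lp (fun _ : Jt => ℝ) 2 := ⟨gfun p, gfun_memℓp p⟩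

theorem norm_fmap_sub_sq (p q : BoxV) :
    ‖fmap p - fmap q‖ ^ 2 = ∑ j ∈ spt p ∪ spt q, (gfun p j - gfun q j) ^ 2 := by
  have h2 : (0:ℝ) < (2 : ENNReal).toReal := by norm_num
  have := lp.norm_rpow_eq_tsum h2 (fmap p - fmap q)
  have hcoe : ∀ j : Jt, (↑(fmap p - fmap q) : Jt → ℝ) j = gfun p j - gfun q j := by
    intro j; rfl
  rw [show (2 : ENNReal).toReal = (2:ℝ) by norm_num] at this
  have hsum : ∑' j : Jt, ‖(↑(fmap p - fmap q) : Jt → ℝ) j‖ ^ (2:ℝ) =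
      ∑ j ∈ spt p ∪ spt q, (gfun p j - gfun q j) ^ 2 := by
    rw [tsum_eq_sum (s := spt p ∪ spt q)]
    · apply Finset.sum_congr rfl
      intro j _
      rw [hcoe j, Real.rpow_two, ← sq_abs, abs_norm, Real.norm_eq_abs, sq_abs]
    · intro j hj
      rw [hcoe j, gfun_eq_zero j (fun hm => hj (Finset.mem_union_left _ hm)),
        gfun_eq_zero j (fun hm => hj (Finset.mem_union_right _ hm))]
      simp only [sub_zero, norm_zero]
      rw [Real.zero_rpow]
      norm_num
  calc ‖fmap p - fmap q‖ ^ 2 = ‖fmap p - fmap q‖ ^ (2:ℝ) := by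
        rw [Real.rpow_two]
    _ = _ := by rw [this, hsum]
theorem spt_fst (n : ℕ) (x : (lv n).V) :
    spt ⟨n, x⟩ = (Finset.univ.image fun i : In n => (Sum.inl ⟨n, i⟩ : Jt)) ∪
      {Sum.inr n} := rfl

theorem sum_image_inl (n : ℕ) (F : Jt → ℝ) :
    ∑ j ∈ Finset.univ.image (fun i : In n => (Sum.inl ⟨n, i⟩ : Jt)), F j =
      ∑ i : In n, F (Sum.inl ⟨n, i⟩) := by
  rw [Finset.sum_image]
  intro a _ b _ h
  have := Sum.inl.inj h
  rw [Sigma.mk.inj_iff] at this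
  exact eq_of_heq this.2

theorem key_same (n : ℕ) (x y : (lv n).V) :
    ∑ j ∈ spt ⟨n, x⟩ ∪ spt ⟨n, y⟩, (gfun ⟨n, x⟩ j - gfun ⟨n, y⟩ j) ^ 2 =
      (wallDistAt n x y : ℝ) := by
  have hs : spt (⟨n, x⟩ : BoxV) ∪ spt ⟨n, y⟩ = spt ⟨n, x⟩ := by
    rw [spt_fst, spt_fst, Finset.union_self]
  rw [hs, spt_fst]
  rw [Finset.sum_union (by
    simp only [Finset.disjoint_singleton_right, Finset.mem_image]
    rintro ⟨i, -, h⟩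
    exact Sum.inl_ne_inr h)]
  rw [sum_image_inl]
  have h1 : ∀ i : In n, gfun ⟨n, x⟩ (Sum.inl ⟨n, i⟩) - gfun ⟨n, y⟩ (Sum.inl ⟨n, i⟩)
      = uu n x i - uu n y i := by
    intro i
    show (dite _ _ _) - (dite _ _ _) = _
    rw [dif_pos rfl, dif_pos rfl]
    ring
  have h2 : gfun ⟨n, x⟩ (Sum.inr n) - gfun ⟨n, y⟩ (Sum.inr n) = 0 := sub_self _
  rw [Finset.sum_singleton, h2]
  rw [Finset.sum_congr rfl (fun i _ => by rw [h1 i])]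
  rw [sum_uu]
  norm_num

theorem key_diff (n m : ℕ) (h : n ≠ m) (x : (lv n).V) (y : (lv m).V) :
    ∑ j ∈ spt ⟨n, x⟩ ∪ spt ⟨m, y⟩, (gfun ⟨n, x⟩ j - gfun ⟨m, y⟩ j) ^ 2 =
      (wallDistAt n x (basept n) : ℝ) + (wallDistAt m y (basept m) : ℝ) +
        ((diamW n : ℝ) + n) + ((diamW m : ℝ) + m) := by
  have hinl : ∀ (k : ℕ) (i : In k) (p : BoxV), p.1 ≠ k →
      gfun p (Sum.inl ⟨k, i⟩) = 0 := by
    intro k i p hp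
    show dite _ _ _ = 0
    rw [dif_neg hp]
  have hinr : ∀ (k : ℕ) (p : BoxV), p.1 ≠ k → gfun p (Sum.inr k) = 0 := by
    intro k p hp
    show ite _ _ _ = 0
    rw [if_neg hp]
  have hA : spt (⟨n, x⟩ : BoxV) ∪ spt ⟨m, y⟩ =
      ((Finset.univ.image fun i : In n => (Sum.inl ⟨n, i⟩ : Jt)) ∪
       (Finset.univ.image fun i : In m => (Sum.inl ⟨m, i⟩ : Jt))) ∪
      ({Sum.inr n} ∪ {Sum.inr m}) := by
    rw [spt_fst, spt_fst]
    ext j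
    simp only [Finset.mem_union]
    tauto
  rw [hA]
  have hdisj1 : Disjoint
      ((Finset.univ.image fun i : In n => (Sum.inl ⟨n, i⟩ : Jt)) ∪
       (Finset.univ.image fun i : In m => (Sum.inl ⟨m, i⟩ : Jt)))
      ({Sum.inr n} ∪ ({Sum.inr m} : Finset Jt)) := by
    rw [Finset.disjoint_left]
    intro j hj hj'
    rw [Finset.mem_union, Finset.mem_singleton, Finset.mem_singleton] at hj'
    rw [Finset.mem_union] at hj
    rcases hj with hj | hj <;> obtain ⟨i, -, rfl⟩ := Finset.mem_image.mp hj <;>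
      rcases hj' with h' | h' <;> exact Sum.inl_ne_inr h'
  have hdisj2 : Disjoint (Finset.univ.image fun i : In n => (Sum.inl ⟨n, i⟩ : Jt))
      (Finset.univ.image fun i : In m => (Sum.inl ⟨m, i⟩ : Jt)) := by
    rw [Finset.disjoint_left]
    intro j hj hj'
    obtain ⟨i, -, rfl⟩ := Finset.mem_image.mp hj
    obtain ⟨i', -, h'⟩ := Finset.mem_image.mp hj'
    have := Sum.inl.inj h'
    rw [Sigma.mk.inj_iff] at this
    exact h this.1.symm
  have hdisj3 : Disjoint ({Sum.inr n} : Finset Jt) {Sum.inr m} := by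
    simp only [Finset.disjoint_singleton]
    intro hc
    exact h (Sum.inr.inj hc)
  rw [Finset.sum_union hdisj1, Finset.sum_union hdisj2, Finset.sum_union hdisj3]
  rw [sum_image_inl, sum_image_inl, Finset.sum_singleton, Finset.sum_singleton]
  have e1 : ∑ i : In n, (gfun ⟨n, x⟩ (Sum.inl ⟨n, i⟩) - gfun ⟨m, y⟩ (Sum.inl ⟨n, i⟩)) ^ 2
      = (wallDistAt n x (basept n) : ℝ) := by
    rw [Finset.sum_congr rfl (fun i _ => by
      rw [hinl n i ⟨m, y⟩ (Ne.symm h), sub_zero,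
        show gfun (⟨n, x⟩ : BoxV) (Sum.inl ⟨n, i⟩) = uu n x i - uu n (basept n) i from
          dif_pos rfl])]
    exact sum_uu n x (basept n)
  have e2 : ∑ i : In m, (gfun ⟨n, x⟩ (Sum.inl ⟨m, i⟩) - gfun ⟨m, y⟩ (Sum.inl ⟨m, i⟩)) ^ 2
      = (wallDistAt m y (basept m) : ℝ) := by
    rw [Finset.sum_congr rfl (fun i _ => by
      rw [hinl m i ⟨n, x⟩ h, zero_sub,
        show gfun (⟨m, y⟩ : BoxV) (Sum.inl ⟨m, i⟩) = uu m y i - uu m (basept m) i from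
          dif_pos rfl, neg_sq])]
    exact sum_uu m y (basept m)
  have hnn : ∀ k : ℕ, (0:ℝ) ≤ (diamW k : ℝ) + k := by
    intro k; positivity
  have e3 : (gfun ⟨n, x⟩ (Sum.inr n) - gfun ⟨m, y⟩ (Sum.inr n)) ^ 2 = (diamW n : ℝ) + n := by
    rw [hinr n ⟨m, y⟩ (Ne.symm h), sub_zero,
      show gfun (⟨n, x⟩ : BoxV) (Sum.inr n) = Real.sqrt ((diamW n : ℝ) + n) from if_pos rfl,
      Real.sq_sqrt (hnn n)]
  have e4 : (gfun ⟨n, x⟩ (Sum.inr m) - gfun ⟨m, y⟩ (Sum.inr m)) ^ 2 = (diamW m : ℝ) + m := by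
    rw [hinr m ⟨n, x⟩ h, zero_sub,
      show gfun (⟨m, y⟩ : BoxV) (Sum.inr m) = Real.sqrt ((diamW m : ℝ) + m) from if_pos rfl,
      neg_sq, Real.sq_sqrt (hnn m)]
  rw [e1, e2, e3, e4]
  ring

theorem key_bounds (p q : BoxV) :
    (boxDistW p q : ℝ) ≤ ‖fmap p - fmap q‖ ^ 2 ∧
      ‖fmap p - fmap q‖ ^ 2 ≤ 2 * (boxDistW p q : ℝ) := by
  obtain ⟨n, x⟩ := p
  obtain ⟨m, y⟩ := q
  rw [norm_fmap_sub_sq ⟨n, x⟩ ⟨m, y⟩]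
  by_cases h : n = m
  · subst h
    rw [key_same]
    have hd : boxDistW ⟨n, x⟩ ⟨n, y⟩ = wallDistAt n x y := by
      unfold boxDistW
      rw [dif_pos rfl]
    rw [hd]
    refine ⟨le_refl _, ?_⟩
    nlinarith [Nat.cast_nonneg (α := ℝ) (wallDistAt n x y)]
  · rw [key_diff n m h]
    have hd : boxDistW ⟨n, x⟩ ⟨m, y⟩ = diamW n + diamW m + n + m := by
      unfold boxDistW
      rw [dif_neg h]
    rw [hd]
    push_cast
    have b1 : (wallDistAt n x (basept n) : ℝ) ≤ (diamW n : ℝ) :=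
      Nat.cast_le.mpr (wallDistAt_le_diamW n x (basept n))
    have b2 : (wallDistAt m y (basept m) : ℝ) ≤ (diamW m : ℝ) :=
      Nat.cast_le.mpr (wallDistAt_le_diamW m y (basept m))
    have c1 : (0:ℝ) ≤ (wallDistAt n x (basept n) : ℝ) := Nat.cast_nonneg _
    have c2 : (0:ℝ) ≤ (wallDistAt m y (basept m) : ℝ) := Nat.cast_nonneg _
    have c3 : (0:ℝ) ≤ (n:ℝ) := Nat.cast_nonneg _
    have c4 : (0:ℝ) ≤ (m:ℝ) := Nat.cast_nonneg _
    constructor <;> nlinarith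
theorem tendsto_of_sq_tendsto {u : ℕ → ℝ} (h0 : ∀ j, 0 ≤ u j)
    (h : Filter.Tendsto (fun j => u j ^ 2) Filter.atTop Filter.atTop) :
    Filter.Tendsto u Filter.atTop Filter.atTop := by
  rw [Filter.tendsto_atTop] at h ⊢
  intro b
  filter_upwards [h ((max b 0) ^ 2)] with j hj
  have h1 : 0 ≤ max b 0 := le_max_right b 0
  have h2 : b ≤ max b 0 := le_max_left b 0
  nlinarith [h0 j]


/-- The box space `(X, d_W) = ⊔ (X_n, d_{W_n})`, where each `X_n` (`n ≥ 1`) is the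
`ℤ/2`-homology cover of `X_{n-1}` equipped with the associated wall metric,
coarsely embeds into a Hilbert space. -/
theorem boxSpace_wall_metric_coarselyEmbeddable :
    CoarselyEmbeddableIntoHilbert (fun p q : BoxV => (boxDistW p q : ℝ)) := by
  refine ⟨lp (fun _ : Jt => ℝ) 2, inferInstance, inferInstance, inferInstance, fmap, ?_⟩
  intro x y
  set d : ℕ → ℝ := fun j => (boxDistW (x j) (y j) : ℝ) with hd
  set N : ℕ → ℝ := fun j => ‖fmap (x j) - fmap (y j)‖ with hN
  have h1 : ∀ j, d j ≤ N j ^ 2 := fun j => (key_bounds (x j) (y j)).1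
  have h2 : ∀ j, N j ^ 2 ≤ 2 * d j := fun j => (key_bounds (x j) (y j)).2
  have hN0 : ∀ j, 0 ≤ N j := fun j => norm_nonneg _
  constructor
  · intro hdT
    exact tendsto_of_sq_tendsto hN0 (Filter.tendsto_atTop_mono h1 hdT)
  · intro hNT
    have hsq : Filter.Tendsto (fun j => N j ^ 2) Filter.atTop Filter.atTop :=
      (Filter.tendsto_pow_atTop two_ne_zero).comp hNT
    have hhalf : Filter.Tendsto (fun j => N j ^ 2 / 2) Filter.atTop Filter.atTop :=
      hsq.atTop_div_const (by norm_num)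
    exact Filter.tendsto_atTop_mono (fun j => by linarith [h2 j]) hhalf
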